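/- Let p > 0, b > 0, λ ∈ ℝ, and let n be a nonnegative integer. Then for every real z, the n-th derivative of the function z ↦ E^λ_{p,b}(−z) equals (−1)^n (λ)_n E^{λ+n}_{p,b+pn}(−z), where (λ)_n = λ(λ+1)⋯(λ+n−1) is the rising factorial. -/

import Mathlib

/-- The generalized Mittag-Leffler function
`E^λ_{p,b}(z) = Σ_{k=0}^∞ (λ)_k z^k / (Γ(pk+b) k!)`, where `(λ)_k` is the rising
factorial. -/
noncomputable def genMittagLeffler (p b lam z : ℝ) : ℝ :=
  ∑' k : ℕ, (ascPochhammer ℝ k).eval lam * z ^ k /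
    (Real.Gamma (p * k + b) * (Nat.factorial k : ℝ))

open Real Filter Polynomial Set
lemma gML_gamma_lower {x q : ℝ} (hx : 2 ≤ x) (hq : 0 < q) :
    Real.Gamma x * (x - 1) ^ q ≤ Real.Gamma (x + q) := by
  have hx1 : (0:ℝ) < x - 1 := by linarith
  have hxpos : (0:ℝ) < x := by linarith
  have hxq : (0:ℝ) < x + q := by linarith
  have hs := Real.convexOn_log_Gamma.slope_mono_adjacent
    (Set.mem_Ioi.2 hx1) (Set.mem_Ioi.2 hxq) (by linarith : x - 1 < x) (by linarith : x < x + q)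
  have hG1 : Real.Gamma x = (x - 1) * Real.Gamma (x - 1) := by
    have := Real.Gamma_add_one (ne_of_gt hx1)
    rwa [show x - 1 + 1 = x by ring] at this
  have hGpos : 0 < Real.Gamma (x - 1) := Real.Gamma_pos_of_pos hx1
  have hGx : 0 < Real.Gamma x := Real.Gamma_pos_of_pos hxpos
  have hGxq : 0 < Real.Gamma (x + q) := Real.Gamma_pos_of_pos hxq
  have hlog : (Real.log ∘ Real.Gamma) x - (Real.log ∘ Real.Gamma) (x - 1) = Real.log (x - 1) := by
    simp only [Function.comp_apply, hG1]
    rw [Real.log_mul (ne_of_gt hx1) (ne_of_gt hGpos)]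
    ring
  rw [show x - (x - 1) = 1 by ring, div_one, hlog] at hs
  have key : Real.log (Real.Gamma x) + q * Real.log (x - 1) ≤ Real.log (Real.Gamma (x + q)) := by
    have h2 : q * Real.log (x - 1) ≤
        (Real.log ∘ Real.Gamma) (x + q) - (Real.log ∘ Real.Gamma) x := by
      rw [show x + q - x = q by ring] at hs
      calc q * Real.log (x - 1)
          ≤ q * (((Real.log ∘ Real.Gamma) (x + q) - (Real.log ∘ Real.Gamma) x) / q) :=
            mul_le_mul_of_nonneg_left hs (le_of_lt hq)
        _ = _ := by field_simp
    simp only [Function.comp_apply] at h2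
    linarith
  calc Real.Gamma x * (x - 1) ^ q
      = Real.exp (Real.log (Real.Gamma x) + q * Real.log (x - 1)) := by
        rw [Real.exp_add, Real.exp_log hGx, Real.rpow_def_of_pos hx1,
          mul_comm (Real.log (x-1)) q]
    _ ≤ Real.exp (Real.log (Real.Gamma (x + q))) := Real.exp_le_exp.2 key
    _ = Real.Gamma (x + q) := Real.exp_log hGxq

lemma gML_summable_master (p b lam r : ℝ) (hp : 0 < p) (hb : 0 < b) (hr : 0 ≤ r) :
    Summable (fun k : ℕ => ((k:ℝ)+1) * |(ascPochhammer ℝ k).eval lam| * r ^ k /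
      (Real.Gamma (p * k + b) * (Nat.factorial k : ℝ))) := by
  apply summable_of_ratio_norm_eventually_le (r := 1/2) (by norm_num)
  have hpk : Tendsto (fun k : ℕ => p * k + b - 1) atTop atTop := by
    have := tendsto_atTop_add_const_right atTop (b - 1)
      (tendsto_natCast_atTop_atTop.const_mul_atTop hp (f := fun k : ℕ => (k:ℝ)))
    simpa [add_sub_assoc] using this
  have h1 : ∀ᶠ k : ℕ in atTop, 2 ≤ p * k + b := by
    filter_upwards [hpk.eventually_ge_atTop 1] with k hk; linarith
  have h3 : ∀ᶠ k : ℕ in atTop, 8 * r ≤ (p * k + b - 1) ^ p :=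
    ((tendsto_rpow_atTop hp).comp hpk).eventually_ge_atTop (8 * r)
  have h2 : ∀ᶠ k : ℕ in atTop, |lam| + 2 ≤ (k:ℝ) :=
    tendsto_natCast_atTop_atTop.eventually_ge_atTop _
  filter_upwards [h1, h2, h3] with k hk1 hk2 hk3
  set K : ℝ := (k : ℝ) with hK
  set P : ℝ := |(ascPochhammer ℝ k).eval lam| with hPdef
  set G : ℝ := Real.Gamma (p * k + b) with hGdef
  set G' : ℝ := Real.Gamma (p * (k+1 : ℕ) + b) with hG'def
  set F : ℝ := (Nat.factorial k : ℝ) with hFdef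
  have hKpos : (0:ℝ) ≤ K := Nat.cast_nonneg k
  have hGpos : 0 < G := Real.Gamma_pos_of_pos (by linarith)
  have hG'pos : 0 < G' := Real.Gamma_pos_of_pos (by push_cast; nlinarith)
  have hFpos : 0 < F := by rw [hFdef]; exact_mod_cast Nat.factorial_pos k
  have hPnonneg : 0 ≤ P := abs_nonneg _
  have hGlow : G * (p * k + b - 1) ^ p ≤ G' := by
    have := gML_gamma_lower hk1 hp
    rw [hG'def, show p * ((k+1:ℕ):ℝ) + b = p * (k:ℝ) + b + p by push_cast; ring]
    exact this
  have hl : |lam + K| ≤ 2 * (K + 1) := by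
    have h := abs_add_le lam K
    have habs : |K| = K := abs_of_nonneg hKpos
    have : |lam| ≤ K := by linarith
    rw [habs] at h; linarith
  have hrp : 0 ≤ (p * k + b - 1) ^ p := Real.rpow_nonneg (by linarith) p
  have hkey : (K + 2) * |lam + K| * r * (2 * G) ≤ (K + 1) * (K + 1) * G' :=
    calc (K + 2) * |lam + K| * r * (2 * G)
        ≤ (2 * (K + 1)) * (2 * (K + 1)) * r * (2 * G) := by
          apply mul_le_mul_of_nonneg_right _ (by positivity : (0:ℝ) ≤ 2 * G)
          apply mul_le_mul_of_nonneg_right _ hr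
          exact mul_le_mul (by linarith) hl (abs_nonneg _) (by linarith)
      _ = (K + 1) * (K + 1) * (G * (8 * r)) := by ring
      _ ≤ (K + 1) * (K + 1) * (G * ((p * (k:ℝ) + b - 1) ^ p)) := by
          apply mul_le_mul_of_nonneg_left _ (by positivity)
          exact mul_le_mul_of_nonneg_left hk3 hGpos.le
      _ ≤ (K + 1) * (K + 1) * G' := mul_le_mul_of_nonneg_left hGlow (by positivity)
  have hP1 : (ascPochhammer ℝ (k+1)).eval lam = (ascPochhammer ℝ k).eval lam * (lam + K) :=
    ascPochhammer_succ_eval k lam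
  have hfact : ((k+1).factorial : ℝ) = (K + 1) * F := by
    rw [hFdef, hK]; push_cast [Nat.factorial_succ]; ring
  rw [Real.norm_eq_abs, Real.norm_eq_abs, hP1, abs_mul, ← hPdef, hfact, pow_succ,
    show ((((k+1):ℕ)):ℝ) + 1 = K + 2 from by rw [hK]; push_cast; ring]
  have hnn1 : (0:ℝ) ≤ (K + 2) * (P * |lam + K|) * (r ^ k * r) / (G' * ((K + 1) * F)) :=
    div_nonneg (mul_nonneg (mul_nonneg (by linarith) (mul_nonneg hPnonneg (abs_nonneg _)))
      (mul_nonneg (pow_nonneg hr k) hr))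
      (mul_nonneg hG'pos.le (mul_nonneg (by linarith) hFpos.le))
  have hnn2 : (0:ℝ) ≤ (K + 1) * P * r ^ k / (G * F) :=
    div_nonneg (mul_nonneg (mul_nonneg (by linarith) hPnonneg) (pow_nonneg hr k))
      (mul_nonneg hGpos.le hFpos.le)
  rw [abs_of_nonneg hnn1, abs_of_nonneg hnn2,
    show (1:ℝ)/2 * ((K + 1) * P * r ^ k / (G * F)) = ((K + 1) * P * r ^ k / 2) / (G * F) from by
      ring,
    div_le_div_iff₀ (mul_pos hG'pos (mul_pos (by linarith : (0:ℝ) < K + 1) hFpos))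
      (mul_pos hGpos hFpos)]
  calc (K + 2) * (P * |lam + K|) * (r ^ k * r) * (G * F)
      = ((K + 2) * |lam + K| * r * (2 * G)) * (P * r ^ k * F / 2) := by ring
    _ ≤ ((K + 1) * (K + 1) * G') * (P * r ^ k * F / 2) :=
        mul_le_mul_of_nonneg_right hkey
          (div_nonneg (mul_nonneg (mul_nonneg hPnonneg (pow_nonneg hr k)) hFpos.le) (by norm_num))
    _ = (K + 1) * P * r ^ k / 2 * (G' * ((K + 1) * F)) := by ring

lemma ascPochhammer_eval_succ_left (n : ℕ) (x : ℝ) :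
    (ascPochhammer ℝ (n+1)).eval x = x * (ascPochhammer ℝ n).eval (x+1) := by
  rw [ascPochhammer_succ_left, Polynomial.eval_mul, Polynomial.eval_X, Polynomial.eval_comp,
    Polynomial.eval_add, Polynomial.eval_X, Polynomial.eval_one]

lemma hasDerivAt_gML (p b lam : ℝ) (hp : 0 < p) (hb : 0 < b) (z : ℝ) :
    HasDerivAt (fun y => genMittagLeffler p b lam y)
      (lam * genMittagLeffler p (b + p) (lam + 1) z) z := by
  set R : ℝ := |z| + 1 with hR
  have hR1 : 1 ≤ R := by have := abs_nonneg z; rw [hR]; linarith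
  have hmem : z ∈ Metric.ball (0:ℝ) R := by
    simp only [Metric.mem_ball, Real.dist_eq, sub_zero, hR]; linarith
  set g' : ℕ → ℝ → ℝ := fun k y =>
    (ascPochhammer ℝ k).eval lam * ((k:ℝ) * y ^ (k-1)) /
      (Real.Gamma (p*k+b) * (Nat.factorial k : ℝ)) with hg'
  set u : ℕ → ℝ := fun k => ((k:ℝ)+1) * |(ascPochhammer ℝ k).eval lam| * R ^ k /
      (Real.Gamma (p * k + b) * (Nat.factorial k : ℝ)) with hu'
  have hu : Summable u := gML_summable_master p b lam R hp hb (by linarith)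
  have hGpos : ∀ k : ℕ, 0 < Real.Gamma (p * k + b) := fun k =>
    Real.Gamma_pos_of_pos (by positivity)
  have hD : ∀ k : ℕ, 0 < Real.Gamma (p * k + b) * (Nat.factorial k : ℝ) := fun k =>
    mul_pos (hGpos k) (by exact_mod_cast Nat.factorial_pos k)
  have hbound : ∀ (k : ℕ), ∀ y ∈ Metric.ball (0:ℝ) R, ‖g' k y‖ ≤ u k := by
    intro k y hy
    have hyR : |y| ≤ R := by
      rw [Metric.mem_ball, Real.dist_eq, sub_zero] at hy; linarith
    rw [hg', hu']
    simp only [Real.norm_eq_abs, abs_div, abs_mul, abs_of_pos (hD k), abs_pow,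
      Nat.abs_cast]
    rw [div_le_div_iff₀ (hD k) (hD k)]
    apply mul_le_mul_of_nonneg_right _ (hD k).le
    have h1 : |y|^(k-1) ≤ R^(k-1) := pow_le_pow_left₀ (abs_nonneg y) hyR _
    have h2 : R^(k-1) ≤ R^k := pow_le_pow_right₀ hR1 (Nat.sub_le k 1)
    calc |(ascPochhammer ℝ k).eval lam| * ((k:ℝ) * |y|^(k-1))
        ≤ |(ascPochhammer ℝ k).eval lam| * (((k:ℝ)+1) * R^k) := by
          apply mul_le_mul_of_nonneg_left _ (abs_nonneg _)
          exact mul_le_mul (by linarith) (h1.trans h2) (by positivity) (by linarith)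
      _ = ((k:ℝ)+1) * |(ascPochhammer ℝ k).eval lam| * R^k := by ring
  have hderiv : ∀ (k : ℕ), ∀ y ∈ Metric.ball (0:ℝ) R,
      HasDerivAt (fun w => (ascPochhammer ℝ k).eval lam * w ^ k /
        (Real.Gamma (p*k+b) * (Nat.factorial k : ℝ))) (g' k y) y := by
    intro k y _
    exact ((hasDerivAt_pow k y).const_mul ((ascPochhammer ℝ k).eval lam)).div_const _
  have hsum0 : Summable (fun k : ℕ => (ascPochhammer ℝ k).eval lam * z ^ k /
      (Real.Gamma (p*k+b) * (Nat.factorial k : ℝ))) := by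
    apply hu.of_norm_bounded
    intro k
    rw [hu']
    simp only [Real.norm_eq_abs, abs_div, abs_mul, abs_of_pos (hD k), abs_pow]
    rw [div_le_div_iff₀ (hD k) (hD k)]
    apply mul_le_mul_of_nonneg_right _ (hD k).le
    calc |(ascPochhammer ℝ k).eval lam| * |z|^k
        ≤ |(ascPochhammer ℝ k).eval lam| * R^k := by
          apply mul_le_mul_of_nonneg_left _ (abs_nonneg _)
          exact pow_le_pow_left₀ (abs_nonneg z) (by rw [hR]; linarith) k
      _ ≤ ((k:ℝ)+1) * |(ascPochhammer ℝ k).eval lam| * R^k := by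
          apply mul_le_mul_of_nonneg_right _ (by positivity)
          nlinarith [abs_nonneg ((ascPochhammer ℝ k).eval lam), Nat.cast_nonneg (α := ℝ) k]
  have h := hasDerivAt_tsum_of_isPreconnected hu Metric.isOpen_ball
    (convex_ball (0:ℝ) R).isPreconnected hderiv hbound hmem hsum0 hmem
  have hsum' : Summable (fun k : ℕ => g' k z) :=
    Summable.of_norm_bounded hu (fun k => hbound k z hmem)
  have hval : (∑' k : ℕ, g' k z) = lam * genMittagLeffler p (b + p) (lam + 1) z := by
    rw [hsum'.tsum_eq_zero_add]
    have h0 : g' 0 z = 0 := by simp [hg']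
    rw [h0, zero_add]
    have hterm : ∀ k : ℕ, g' (k+1) z =
        lam * ((ascPochhammer ℝ k).eval (lam+1) * z ^ k /
          (Real.Gamma (p * k + (b + p)) * (Nat.factorial k : ℝ))) := by
      intro k
      rw [hg']
      simp only
      rw [ascPochhammer_eval_succ_left,
        show p * ((k+1:ℕ):ℝ) + b = p * (k:ℝ) + (b + p) by push_cast; ring,
        show ((k+1).factorial : ℝ) = ((k:ℝ)+1) * (Nat.factorial k : ℝ) by
          push_cast [Nat.factorial_succ]; ring,
        show k + 1 - 1 = k from rfl]
      have hk1 : ((k:ℝ)+1) ≠ 0 := by positivity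
      have hG : Real.Gamma (p * k + (b + p)) ≠ 0 :=
        (Real.Gamma_pos_of_pos (by positivity)).ne'
      have hF : (Nat.factorial k : ℝ) ≠ 0 := by exact_mod_cast (Nat.factorial_pos k).ne'
      push_cast
      field_simp
    rw [tsum_congr hterm, tsum_mul_left]
    rfl
  rw [← hval]
  exact h

lemma hasDerivAt_gML_neg (p b lam : ℝ) (hp : 0 < p) (hb : 0 < b) (z : ℝ) :
    HasDerivAt (fun y => genMittagLeffler p b lam (-y))
      (-lam * genMittagLeffler p (b + p) (lam + 1) (-z)) z := by
  have h := (hasDerivAt_gML p b lam hp hb (-z)).comp z (hasDerivAt_neg z)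
  simpa [Function.comp_def, mul_comm] using h

lemma gML_aux (p : ℝ) (hp : 0 < p) : ∀ (n : ℕ) (b lam : ℝ), 0 < b → ∀ (c z : ℝ),
    iteratedDeriv n (fun z => c * genMittagLeffler p b lam (-z)) z
      = c * ((-1:ℝ) ^ n * (ascPochhammer ℝ n).eval lam *
          genMittagLeffler p (b + p * n) (lam + n) (-z)) := by
  intro n
  induction n with
  | zero =>
    intro b lam hb c z
    simp [iteratedDeriv_zero]
  | succ n ih =>
    intro b lam hb c z
    rw [iteratedDeriv_succ']
    have hder : (deriv fun z => c * genMittagLeffler p b lam (-z))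
        = fun z => (c * -lam) * genMittagLeffler p (b + p) (lam + 1) (-z) := by
      funext y
      rw [((hasDerivAt_gML_neg p b lam hp hb y).const_mul c).deriv]
      ring
    rw [hder, ih (b + p) (lam + 1) (by linarith) (c * -lam) z,
      show b + p * ((n+1:ℕ):ℝ) = b + p + p * (n:ℝ) by push_cast; ring,
      show lam + ((n+1:ℕ):ℝ) = lam + 1 + (n:ℝ) by push_cast; ring,
      ascPochhammer_eval_succ_left]
    ring

/-- **Derivatives of the generalized Mittag-Leffler function.**
For `p > 0`, `b > 0`, real `λ`, and `n ≥ 0`, the `n`-th derivative of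
`z ↦ E^λ_{p,b}(−z)` is `(−1)^n (λ)_n E^{λ+n}_{p,b+pn}(−z)`. -/
theorem genMittagLeffler_iteratedDeriv (p b lam : ℝ) (hp : 0 < p) (hb : 0 < b)
    (n : ℕ) (z : ℝ) :
    iteratedDeriv n (fun z => genMittagLeffler p b lam (-z)) z
      = (-1 : ℝ) ^ n * (ascPochhammer ℝ n).eval lam *
          genMittagLeffler p (b + p * n) (lam + n) (-z) := by
  have h := gML_aux p hp n b lam hb 1 z
  simpa using h
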